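/- Let g : X_i^* → X_2^* be a Gödel numbering. Then there exists an integer N such that for every n ≥ 1 the set {x ∈ X_i^* : |x|_i = n and ρ^1_g(x) ≤ N} is all of X_i^n; in particular lim_{n→∞} i^{−n} · card{x ∈ X_i^* : |x|_i = n and ρ^1_g(x) ≤ N} = 1 ≠ 0, so ρ^1_g does not satisfy the density-vanishing condition. -/

import Mathlib

open scoped ENNReal

/-- Finite strings over an alphabet with `i` letters. -/
abbrev Str (i : ℕ) : Type := List (Fin i)

/-- A set of strings is prefix-free: no element is a proper prefix of another. -/
def PrefixFree {i : ℕ} (S : Set (Str i)) : Prop :=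
  ∀ x ∈ S, ∀ y ∈ S, x <+: y → x = y

/-- A self-delimiting machine over the alphabet with `i` letters: a partial computable
function on strings whose domain is prefix-free. -/
structure Machine (i : ℕ) where
  f : Str i →. Str i
  partrec : Partrec f
  prefixFree : PrefixFree f.Dom

/-- Program-size complexity of `x` relative to the machine `T`:
the least length of a program `y` with `T(y) = x` (with `min ∅ = ∞`). -/
noncomputable def Hc {i : ℕ} (T : Machine i) (x : Str i) : ℝ≥0∞ :=
  sInf {n : ℝ≥0∞ | ∃ y : Str i, (y.length : ℝ≥0∞) = n ∧ x ∈ T.f y}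

/-- `U` is a universal machine: it minimizes program-size complexity up to an
additive constant among all machines. -/
def IsUniversal {i : ℕ} (U : Machine i) : Prop :=
  ∀ T : Machine i, ∃ c : ℕ, ∀ x : Str i, Hc U x ≤ Hc T x + (c : ℝ≥0∞)

/-- A set of strings is computably enumerable if it is the domain of a
partial computable function. -/
def CEset {i : ℕ} (A : Set (Str i)) : Prop :=
  ∃ f : Str i →. Str i, Partrec f ∧ A = f.Dom

/-- A Gödel numbering for `L`: a computable function into binary strings,
injective on `L`. -/
def GoedelNumbering {i : ℕ} (L : Set (Str i)) (g : Str i → Str 2) : Prop :=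
  Computable g ∧ Set.InjOn g L

/-- `ρ¹_g(x) = H₂(g(x))/|x|ᵢ` for `x ≠ λ`, and `0` otherwise. -/
noncomputable def rho1G {i : ℕ} (U2 : Machine 2) (g : Str i → Str 2) (x : Str i) : ℝ≥0∞ :=
  if x = [] then 0 else Hc U2 (g x) / (x.length : ℝ≥0∞)

/-- `ρ¹ᵢ(x) = Hᵢ(x)/|x|ᵢ` for `x ≠ λ`, and `0` otherwise. -/
noncomputable def rho1I {i : ℕ} (U : Machine i) (x : Str i) : ℝ≥0∞ :=
  if x = [] then 0 else Hc U x / (x.length : ℝ≥0∞)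

/-- `ρ²_g(x) = H₂(g(x))/⌈log_i(|x|ᵢ)⌉` for `|x|ᵢ > 1`, and `0` otherwise. -/
noncomputable def rho2G {i : ℕ} (U2 : Machine 2) (g : Str i → Str 2) (x : Str i) : ℝ≥0∞ :=
  if x.length ≤ 1 then 0 else Hc U2 (g x) / ((⌈Real.logb i (x.length : ℝ)⌉₊ : ℕ) : ℝ≥0∞)

/-- `ρ²ᵢ(x) = Hᵢ(x)/⌈log_i(|x|ᵢ)⌉` for `|x|ᵢ > 1`, and `0` otherwise. -/
noncomputable def rho2I {i : ℕ} (U : Machine i) (x : Str i) : ℝ≥0∞ :=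
  if x.length ≤ 1 then 0 else Hc U x / ((⌈Real.logb i (x.length : ℝ)⌉₊ : ℕ) : ℝ≥0∞)


section Aux

/-- decoding automaton step -/
def pstep (i : ℕ) (s : Option (ℕ × List ℕ × Bool)) (b : Fin 2) : Option (ℕ × List ℕ × Bool) :=
  s.bind fun p =>
    if p.2.2 = true then none
    else if (b : ℕ) = 0 then
      (if p.1 + 1 ≤ i then some (p.1 + 1, p.2.1, false) else none)
    else if p.1 < i then some (0, p.1 :: p.2.1, false) else some (0, p.2.1, true)

def pdec (i : ℕ) (y : Str 2) : Option (List ℕ) :=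
  (y.foldl (pstep i) (some (0, [], false))).bind fun p =>
    if p.2.2 = true then some p.2.1.reverse else none

def penc (i : ℕ) (x : Str i) : Str 2 :=
  (x.flatMap fun (a : Fin i) => List.replicate (a : ℕ) 0 ++ [1]) ++ (List.replicate i 0 ++ [1])

lemma foldl_pstep_none (i : ℕ) (l : Str 2) : l.foldl (pstep i) none = none := by
  induction l with
  | nil => rfl
  | cons b t ih => simpa [pstep] using ih

lemma foldl_pstep_replicate (i k z : ℕ) (acc : List ℕ) (h : z + k ≤ i) :
    (List.replicate k (0 : Fin 2)).foldl (pstep i) (some (z, acc, false))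
      = some (z + k, acc, false) := by
  induction k generalizing z with
  | zero => rfl
  | succ k ih =>
      rw [List.replicate_succ, List.foldl_cons]
      have hz : z + 1 ≤ i := by omega
      have : pstep i (some (z, acc, false)) 0 = some (z + 1, acc, false) := by
        simp [pstep, show z < i by omega]
      rw [this, ih (z + 1) (by omega)]
      congr 2
      omega

lemma foldl_pstep_block (i : ℕ) (a : Fin i) (acc : List ℕ) :
    (List.replicate (a : ℕ) (0 : Fin 2) ++ [1]).foldl (pstep i) (some (0, acc, false))
      = some (0, (a : ℕ) :: acc, false) := by
  rw [List.foldl_append, foldl_pstep_replicate i a 0 acc (by omega)]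
  have ha : (a : ℕ) < i := a.2
  simp [pstep, ha]

lemma foldl_pstep_flatMap (i : ℕ) (x : Str i) (acc : List ℕ) :
    ((x.flatMap fun (a : Fin i) => List.replicate (a : ℕ) (0 : Fin 2) ++ [1]).foldl (pstep i)
      (some (0, acc, false)))
      = some (0, (x.map Fin.val).reverse ++ acc, false) := by
  induction x generalizing acc with
  | nil => rfl
  | cons a t ih =>
      rw [List.flatMap_cons, List.foldl_append, foldl_pstep_block, ih]
      simp

lemma pdec_penc (i : ℕ) (x : Str i) : pdec i (penc i x) = some (x.map Fin.val) := by
  unfold pdec penc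
  rw [List.foldl_append, foldl_pstep_flatMap, List.foldl_append,
    foldl_pstep_replicate i i 0 _ (by omega)]
  simp [pstep]

lemma pdec_prefix (i : ℕ) {y y' : Str 2} (hy : (pdec i y).isSome)
    (hy' : (pdec i y').isSome) (hp : y <+: y') : y = y' := by
  obtain ⟨t, rfl⟩ := hp
  rcases t with _ | ⟨b, t⟩
  · simp
  · exfalso
    unfold pdec at hy hy'
    rcases hfold : (y.foldl (pstep i) (some (0, [], false))) with _ | p
    · rw [hfold] at hy; simp at hy
    · rw [hfold] at hy
      have hdone : p.2.2 = true := by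
        by_contra h
        simp [h] at hy
      rw [List.foldl_append, hfold, List.foldl_cons] at hy'
      have : pstep i (some p) b = none := by simp [pstep, hdone]
      rw [this, foldl_pstep_none] at hy'
      simp at hy'

lemma flatMap_block_length (i : ℕ) (x : Str i) :
    (x.flatMap fun (a : Fin i) => List.replicate (a : ℕ) (0 : Fin 2) ++ [1]).length ≤ i * x.length := by
  induction x with
  | nil => simp
  | cons a t ih =>
      rw [List.flatMap_cons, List.length_append]
      have ha : (a : ℕ) < i := a.2
      simp only [List.length_append, List.length_replicate, List.length_cons, List.length_nil]
      have : i * (t.length + 1) = i * t.length + i := by ring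
      omega

lemma penc_length (i : ℕ) (x : Str i) : (penc i x).length ≤ i * x.length + i + 1 := by
  unfold penc
  have := flatMap_block_length i x
  simp only [List.length_append, List.length_replicate, List.length_cons, List.length_nil]
  omega

lemma primrec_pstep (i : ℕ) : Primrec₂ (pstep i) := by
  have hz : Primrec fun x : (Option (ℕ × List ℕ × Bool) × Fin 2) × (ℕ × List ℕ × Bool) =>
      x.2.1 := Primrec.fst.comp .snd
  have hacc : Primrec fun x : (Option (ℕ × List ℕ × Bool) × Fin 2) × (ℕ × List ℕ × Bool) =>
      x.2.2.1 := Primrec.fst.comp (Primrec.snd.comp .snd)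
  have hdn : Primrec fun x : (Option (ℕ × List ℕ × Bool) × Fin 2) × (ℕ × List ℕ × Bool) =>
      x.2.2.2 := Primrec.snd.comp (Primrec.snd.comp .snd)
  have hbv : Primrec fun x : (Option (ℕ × List ℕ × Bool) × Fin 2) × (ℕ × List ℕ × Bool) =>
      ((x.1.2 : Fin 2) : ℕ) := Primrec.fin_val.comp (Primrec.snd.comp .fst)
  have hinner : Primrec₂ fun (a : Option (ℕ × List ℕ × Bool) × Fin 2)
      (p : ℕ × List ℕ × Bool) =>
      (if p.2.2 = true then none
       else if ((a.2 : Fin 2) : ℕ) = 0 then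
         (if p.1 + 1 ≤ i then some (p.1 + 1, p.2.1, false) else none)
       else if p.1 < i then some (0, p.1 :: p.2.1, false)
       else some (0, p.2.1, true)) := by
    refine Primrec.ite (Primrec.eq.comp hdn (.const true)) (.const none) ?_
    refine Primrec.ite (Primrec.eq.comp hbv (.const 0)) ?_ ?_
    · refine Primrec.ite (Primrec.nat_le.comp (Primrec.succ.comp hz) (.const i)) ?_ (.const none)
      exact Primrec.option_some.comp
        ((Primrec.succ.comp hz).pair (hacc.pair (.const false)))
    · refine Primrec.ite (Primrec.nat_lt.comp hz (.const i)) ?_ ?_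
      · exact Primrec.option_some.comp
          ((Primrec.const 0).pair ((Primrec.list_cons.comp hz hacc).pair (.const false)))
      · exact Primrec.option_some.comp
          ((Primrec.const 0).pair (hacc.pair (.const true)))
  have := Primrec.option_bind (Primrec.fst :
    Primrec fun a : Option (ℕ × List ℕ × Bool) × Fin 2 => a.1) hinner
  exact this.of_eq fun ⟨s, b⟩ => rfl

lemma primrec_pdec (i : ℕ) : Primrec (pdec i) := by
  have hfold : Primrec fun y : Str 2 =>
      y.foldl (pstep i) (some (0, [], false)) := by
    have := Primrec.list_foldl (Primrec.id (α := Str 2))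
      (Primrec.const (some ((0 : ℕ), ([] : List ℕ), false)))
      (((primrec_pstep i).comp (Primrec.fst.comp .snd) (Primrec.snd.comp .snd)).to₂)
    exact this.of_eq fun y => rfl
  have hfin : Primrec₂ fun (_ : Str 2) (p : ℕ × List ℕ × Bool) =>
      (if p.2.2 = true then some p.2.1.reverse else none) := by
    refine Primrec.ite (Primrec.eq.comp (Primrec.snd.comp (Primrec.snd.comp .snd)) (.const true))
      ?_ (.const none)
    exact Primrec.option_some.comp
      (Primrec.list_reverse.comp (Primrec.fst.comp (Primrec.snd.comp .snd)))
  exact Primrec.option_bind hfold hfin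

lemma exists_machine {i : ℕ} (hpos : 0 < i) {g : Str i → Str 2} (hg : Computable g) :
    ∃ T : Machine 2, ∀ x : Str i, g x ∈ T.f (penc i x) := by
  set toF : ℕ → Fin i := fun a => ⟨a % i, Nat.mod_lt a hpos⟩ with htoF
  have htoFp : Primrec toF := by
    rw [← Primrec.fin_val_iff]
    exact (Primrec.nat_mod.comp .id (.const i)).of_eq fun a => rfl
  set F : Str 2 →. Str 2 :=
    fun y => Part.ofOption ((pdec i y).map fun l => g (l.map toF)) with hF
  have hcomp : Computable fun y => (pdec i y).map fun l => g (l.map toF) := by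
    refine Computable.option_map (primrec_pdec i).to_comp ?_
    exact (hg.comp ((Primrec.list_map (Primrec.snd) ((htoFp.comp .snd).to₂)).to_comp)).to₂
  have hpr : Partrec F := Computable.ofOption hcomp
  have hdom : ∀ y, y ∈ PFun.Dom F ↔ (pdec i y).isSome := by
    intro y
    rw [PFun.mem_dom]
    constructor
    · rintro ⟨z, hz⟩
      rw [hF] at hz
      simp only [Part.mem_ofOption, Option.mem_def, Option.map_eq_some_iff] at hz
      obtain ⟨l, hl, -⟩ := hz
      simp [hl]
    · intro h
      obtain ⟨l, hl⟩ := Option.isSome_iff_exists.1 h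
      exact ⟨g (l.map toF), by simp [hF, Part.mem_ofOption, hl]⟩
  refine ⟨⟨F, hpr, ?_⟩, ?_⟩
  · intro y hy y' hy' hp
    exact pdec_prefix i ((hdom y).1 hy) ((hdom y').1 hy') hp
  · intro x
    have hx : (x.map Fin.val).map toF = x := by
      rw [List.map_map]
      have : (toF ∘ Fin.val : Fin i → Fin i) = id := by
        funext a
        simp [htoF, Nat.mod_eq_of_lt a.2, Fin.ext_iff]
      rw [this, List.map_id]
    simp [hF, Part.mem_ofOption, pdec_penc, hx]

lemma hc_bound {i : ℕ} (hpos : 0 < i) (U2 : Machine 2) (hU2 : IsUniversal U2)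
    {g : Str i → Str 2} (hg : Computable g) :
    ∃ c : ℕ, ∀ x : Str i, Hc U2 (g x) ≤ ((penc i x).length : ℝ≥0∞) + (c : ℝ≥0∞) := by
  obtain ⟨T, hT⟩ := exists_machine hpos hg
  obtain ⟨c, hc⟩ := hU2 T
  refine ⟨c, fun x => ?_⟩
  have h1 : Hc T (g x) ≤ ((penc i x).length : ℝ≥0∞) :=
    sInf_le ⟨penc i x, rfl, hT x⟩
  exact (hc (g x)).trans (add_le_add_left h1 c)

lemma ncard_len (i n : ℕ) : Set.ncard {x : Str i | x.length = n} = i ^ n := by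
  have e : {x : Str i | x.length = n} ≃ List.Vector (Fin i) n := Equiv.refl _
  rw [← Nat.card_coe_set_eq, Nat.card_congr e, Nat.card_eq_fintype_card,
    card_vector, Fintype.card_fin]

end Aux

/-- For a Gödel numbering `g : Xᵢ* → X₂*` there is an integer `N` such that for every
`n ≥ 1` the set `{x : |x|ᵢ = n, ρ¹_g(x) ≤ N}` is all of `Xᵢⁿ`; in particular
`lim_{n→∞} i^{−n}·card{x : |x|ᵢ = n, ρ¹_g(x) ≤ N} = 1`, so `ρ¹_g` fails the
density-vanishing condition. -/
theorem stmt_11 {i : ℕ} (hi : 2 ≤ i) (Ui : Machine i) (hUi : IsUniversal Ui)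
    (U2 : Machine 2) (hU2 : IsUniversal U2)
    (g : Str i → Str 2) (hg : GoedelNumbering Set.univ g) :
    ∃ N : ℕ,
      (∀ n : ℕ, 1 ≤ n →
        {x : Str i | x.length = n ∧ rho1G U2 g x ≤ (N : ℝ≥0∞)} =
          {x : Str i | x.length = n}) ∧
      Filter.Tendsto
        (fun n : ℕ =>
          (Set.ncard {x : Str i | x.length = n ∧ rho1G U2 g x ≤ (N : ℝ≥0∞)} : ℝ)
            / (i : ℝ) ^ n)
        Filter.atTop (nhds 1) := by
  obtain ⟨c, hc⟩ := hc_bound (by omega : 0 < i) U2 hU2 hg.1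
  refine ⟨2 * i + 1 + c, ?_, ?_⟩
  all_goals
    have hmain : ∀ n : ℕ, 1 ≤ n →
        {x : Str i | x.length = n ∧ rho1G U2 g x ≤ ((2 * i + 1 + c : ℕ) : ℝ≥0∞)} =
          {x : Str i | x.length = n} := by
      intro n hn
      ext x
      simp only [Set.mem_setOf_eq, and_iff_left_iff_imp]
      intro hlen
      have hne : x ≠ [] := by
        intro h; rw [h] at hlen; simp at hlen; omega
      rw [rho1G, if_neg hne, hlen]
      rw [ENNReal.div_le_iff (by exact_mod_cast (by omega : n ≠ 0) : (n : ℝ≥0∞) ≠ 0)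
        (by simp : (n : ℝ≥0∞) ≠ ∞)]
      have h1 : Hc U2 (g x) ≤ (((penc i x).length + c : ℕ) : ℝ≥0∞) := by
        push_cast
        exact hc x
      refine h1.trans ?_
      have h2 : (penc i x).length + c ≤ (2 * i + 1 + c) * n := by
        have h3 := penc_length i x
        rw [hlen] at h3
        nlinarith
      calc (((penc i x).length + c : ℕ) : ℝ≥0∞) ≤ (((2 * i + 1 + c) * n : ℕ) : ℝ≥0∞) := by
            exact_mod_cast h2
        _ = ((2 * i + 1 + c : ℕ) : ℝ≥0∞) * (n : ℝ≥0∞) := by push_cast; ring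
  · exact hmain
  · refine Filter.Tendsto.congr' ?_ tendsto_const_nhds
    filter_upwards [Filter.eventually_ge_atTop 1] with n hn
    rw [hmain n hn, ncard_len]
    have : ((i : ℝ)) ^ n ≠ 0 := pow_ne_zero _ (by positivity)
    rw [Nat.cast_pow]
    exact (div_self this).symm
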